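/- For all n ≥ 0 and complex parameter r, the (q,r)-Dowling numbers satisfy D_{m,r+1,q}(n) = ∑_{j=0}^{n} C(n,j) D_{m,r,q}(j). -/
import Mathlib


open Finset

noncomputable def qint (q : ℂ) (n : ℕ) : ℂ := (q ^ n - 1) / (q - 1)

/-- (q,r)-Whitney numbers of the first kind, via the triangular recurrence
`w(n+1,k) = q^{-n} (w(n,k-1) - (m[n]_q + r) w(n,k))`, with `w(0,0)=1` and
`w(n,k)=0` for `k>n` (the `k<0` values are zero, absorbed in the `k=0` case). -/
noncomputable def qw (q m r : ℂ) : ℕ → ℕ → ℂ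
  | 0, 0 => 1
  | 0, _ + 1 => 0
  | n + 1, 0 => q ^ (-(n : ℤ)) * (0 - (m * qint q n + r) * qw q m r n 0)
  | n + 1, k + 1 => q ^ (-(n : ℤ)) * (qw q m r n k - (m * qint q n + r) * qw q m r n (k + 1))

/-- (q,r)-Whitney numbers of the second kind, via
`W(n+1,k) = q^{k-1} W(n,k-1) + (m[k]_q + r) W(n,k)`, with `W(0,0)=1`. -/
noncomputable def qW (q m r : ℂ) : ℕ → ℕ → ℂ
  | 0, 0 => 1
  | 0, _ + 1 => 0
  | n + 1, 0 => (m * qint q 0 + r) * qW q m r n 0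
  | n + 1, k + 1 => q ^ k * qW q m r n k + (m * qint q (k + 1) + r) * qW q m r n (k + 1)

noncomputable def qD (q m r : ℂ) (n : ℕ) : ℂ := ∑ k ∈ Finset.range (n + 1), qW q m r n k

lemma qW_eq_zero (q m r : ℂ) : ∀ n k, n < k → qW q m r n k = 0 := by
  intro n
  induction n with
  | zero =>
    intro k hk
    obtain ⟨k, rfl⟩ := Nat.exists_eq_add_of_lt hk
    simp [qW]
  | succ n ih =>
    intro k hk
    obtain ⟨j, rfl⟩ : ∃ j, k = j + 1 := ⟨k - 1, (Nat.succ_pred_eq_of_pos (by omega)).symm⟩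
    rw [qW, ih j (by omega), ih (j + 1) (by omega)]
    ring

lemma qW_shift (q m r : ℂ) : ∀ n k, qW q m (r + 1) n k =
    ∑ j ∈ Finset.range (n + 1), (n.choose j : ℂ) * qW q m r j k := by
  intro n
  induction n with
  | zero => intro k; simp; cases k <;> rfl
  | succ n ih =>
    intro k
    have key : ∑ j ∈ Finset.range (n + 2), ((n + 1).choose j : ℂ) * qW q m r j k
        = ∑ j ∈ Finset.range (n + 1), (n.choose j : ℂ) * qW q m r (j + 1) k
          + ∑ j ∈ Finset.range (n + 1), (n.choose j : ℂ) * qW q m r j k := by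
      rw [Finset.sum_range_succ' (fun j => ((n + 1).choose j : ℂ) * qW q m r j k)]
      have h1 : ∀ j, ((n + 1).choose (j + 1) : ℂ) = (n.choose j : ℂ) + (n.choose (j + 1) : ℂ) := by
        intro j
        rw [Nat.choose_succ_succ]
        push_cast
        ring
      calc (∑ j ∈ Finset.range (n + 1), ((n + 1).choose (j + 1) : ℂ) * qW q m r (j + 1) k)
            + ((n + 1).choose 0 : ℂ) * qW q m r 0 k
          = ∑ j ∈ Finset.range (n + 1), (n.choose j : ℂ) * qW q m r (j + 1) k
            + ((∑ j ∈ Finset.range (n + 1), (n.choose (j + 1) : ℂ) * qW q m r (j + 1) k)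
              + (n.choose 0 : ℂ) * qW q m r 0 k) := by
            simp only [h1, add_mul, Finset.sum_add_distrib, Nat.choose_zero_right]
            push_cast; ring
        _ = ∑ j ∈ Finset.range (n + 1), (n.choose j : ℂ) * qW q m r (j + 1) k
            + ∑ j ∈ Finset.range (n + 2), (n.choose j : ℂ) * qW q m r j k := by
            rw [Finset.sum_range_succ' (fun j => (n.choose j : ℂ) * qW q m r j k)]
        _ = _ := by
            congr 1
            rw [Finset.sum_range_succ, Nat.choose_succ_self]
            simp
    rw [key]
    cases k with
    | zero =>
      rw [qW, ih]
      have hrec : ∀ j, qW q m r (j + 1) 0 = (m * qint q 0 + r) * qW q m r j 0 := fun j => rfl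
      simp only [hrec, Finset.mul_sum]
      rw [← Finset.sum_add_distrib]
      exact Finset.sum_congr rfl fun j _ => by ring
    | succ k =>
      rw [qW, ih, ih]
      have hrec : ∀ j, qW q m r (j + 1) (k + 1)
          = q ^ k * qW q m r j k + (m * qint q (k + 1) + r) * qW q m r j (k + 1) := fun j => rfl
      simp only [hrec, Finset.mul_sum]
      rw [← Finset.sum_add_distrib, ← Finset.sum_add_distrib]
      exact Finset.sum_congr rfl fun j _ => by ring

theorem stmt13 (q m r : ℂ) (hq0 : q ≠ 0) (hq1 : q ≠ 1) (n : ℕ) :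
    qD q m (r + 1) n = ∑ j ∈ Finset.range (n + 1), (n.choose j : ℂ) * qD q m r j := by
  unfold qD
  simp only [qW_shift, Finset.mul_sum]
  rw [Finset.sum_comm]
  refine Finset.sum_congr rfl fun j hj => ?_
  rw [Finset.mem_range] at hj
  refine (Finset.sum_subset (Finset.range_subset_range.mpr (by omega)) ?_).symm
  intro k _ hk
  rw [Finset.mem_range, not_lt] at hk
  rw [qW_eq_zero q m r j k (by omega), mul_zero]
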